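/- Let k be a commutative ring, R a commutative k-algebra, and I an ideal of R. For s ≥ 1 let π_s : Ω^1_{R/k} ⊗_R R/I^s → Ω^1_{(R/I^s)/k} denote the canonical surjective R-linear map induced by functoriality of Kähler differentials. Then for every r ≥ 1 there exists an R-linear map σ : Ω^1_{(R/I^(2r))/k} → Ω^1_{R/k} ⊗_R R/I^r such that: (i) the composite σ ∘ π_{2r} : Ω^1_{R/k} ⊗_R R/I^(2r) → Ω^1_{R/k} ⊗_R R/I^r equals the natural transition map induced by the projection R/I^(2r) → R/I^r; and (ii) the composite π_r ∘ σ : Ω^1_{(R/I^(2r))/k} → Ω^1_{(R/I^r)/k} equals the canonical map induced by the projection R/I^(2r) → R/I^r. (In other words, the canonical map of pro-R-modules {Ω^1_{R/k} ⊗_R R/I^r}_r → {Ω^1_{(R/I^r)/k}}_r is an isomorphism.) -/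

import Mathlib

open TensorProduct

lemma aux_D_tmul_one_eq_zero (k R : Type*) [CommRing k] [CommRing R] [Algebra k R]
    (I : Ideal R) (r : ℕ) {a : R} (ha : a ∈ I ^ (2 * r)) :
    (KaehlerDifferential.D k R a) ⊗ₜ[R] (1 : R ⧸ I ^ r) = (0 : Ω[R⁄k] ⊗[R] (R ⧸ I ^ r)) := by
  have h2 : a ∈ I ^ r * I ^ r := by rw [← pow_add]; exact Ideal.pow_le_pow_right (by omega) ha
  refine Submodule.mul_induction_on h2 ?_ ?_
  · intro m hm n hn
    rw [Derivation.leibniz, TensorProduct.add_tmul, TensorProduct.smul_tmul,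
      TensorProduct.smul_tmul]
    have hm' : m • (1 : R ⧸ I ^ r) = 0 := by
      rw [← Algebra.algebraMap_eq_smul_one, Ideal.Quotient.algebraMap_eq,
        Ideal.Quotient.eq_zero_iff_mem]; exact hm
    have hn' : n • (1 : R ⧸ I ^ r) = 0 := by
      rw [← Algebra.algebraMap_eq_smul_one, Ideal.Quotient.algebraMap_eq,
        Ideal.Quotient.eq_zero_iff_mem]; exact hn
    rw [hm', hn', TensorProduct.tmul_zero, TensorProduct.tmul_zero, add_zero]
  · intro x y hx hy
    rw [map_add, TensorProduct.add_tmul, hx, hy, add_zero]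

/-- The canonical surjective `R`-linear map `Ω¹_{R/k} ⊗_R R/I^s → Ω¹_{(R/I^s)/k}`,
sending `ω ⊗ x` to `x • (map ω)`, induced by functoriality of Kähler differentials. -/
noncomputable def kaehlerQuotPi (k R : Type*) [CommRing k] [CommRing R] [Algebra k R]
    (I : Ideal R) (s : ℕ) :
    (Ω[R⁄k] ⊗[R] (R ⧸ I ^ s)) →ₗ[R] Ω[(R ⧸ I ^ s)⁄k] :=
  ((KaehlerDifferential.mapBaseChange k R (R ⧸ I ^ s)).restrictScalars R) ∘ₗ
    (TensorProduct.comm R (Ω[R⁄k]) (R ⧸ I ^ s)).toLinearMap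

set_option maxHeartbeats 1000000 in
/-- The canonical pro-map `{Ω¹_{R/k} ⊗_R R/I^r}_r → {Ω¹_{(R/I^r)/k}}_r` is an isomorphism:
for each `r ≥ 1` there is `σ : Ω¹_{(R/I^(2r))/k} → Ω¹_{R/k} ⊗_R R/I^r` with
`σ ∘ π_{2r}` the natural transition map and `π_r ∘ σ` the canonical map induced by
`R/I^(2r) → R/I^r`. -/
theorem pro_kaehler_tensor_iso (k R : Type*) [CommRing k] [CommRing R] [Algebra k R]
    (I : Ideal R) (r : ℕ) (hr : 1 ≤ r) :
    letI : Algebra (R ⧸ I ^ (2 * r)) (R ⧸ I ^ r) :=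
      RingHom.toAlgebra <| Ideal.quotientMap (I ^ r) (RingHom.id R)
        (by simpa using Ideal.pow_le_pow_right (by omega : r ≤ 2 * r))
    letI : IsScalarTower k (R ⧸ I ^ (2 * r)) (R ⧸ I ^ r) :=
      IsScalarTower.of_algebraMap_eq fun a => rfl
    letI : SMulCommClass k (R ⧸ I ^ (2 * r)) (R ⧸ I ^ r) :=
      ⟨fun a b c => by simp only [Algebra.smul_def]; ring⟩
    ∃ σ : Ω[(R ⧸ I ^ (2 * r))⁄k] →ₗ[R] (Ω[R⁄k] ⊗[R] (R ⧸ I ^ r)),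
      (∀ w : Ω[R⁄k] ⊗[R] (R ⧸ I ^ (2 * r)),
        σ (kaehlerQuotPi k R I (2 * r) w) =
          LinearMap.lTensor (Ω[R⁄k])
            (Submodule.mapQ (I ^ (2 * r)) (I ^ r) LinearMap.id
              (by simpa using Ideal.pow_le_pow_right (by omega : r ≤ 2 * r))) w) ∧
      (∀ w : Ω[(R ⧸ I ^ (2 * r))⁄k],
        kaehlerQuotPi k R I r (σ w) =
          KaehlerDifferential.map k k (R ⧸ I ^ (2 * r)) (R ⧸ I ^ r) w) := by
  letI : Algebra (R ⧸ I ^ (2 * r)) (R ⧸ I ^ r) :=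
    RingHom.toAlgebra <| Ideal.quotientMap (I ^ r) (RingHom.id R)
      (by simpa using Ideal.pow_le_pow_right (by omega : r ≤ 2 * r))
  letI : IsScalarTower k (R ⧸ I ^ (2 * r)) (R ⧸ I ^ r) :=
    IsScalarTower.of_algebraMap_eq fun a => rfl
  letI : SMulCommClass k (R ⧸ I ^ (2 * r)) (R ⧸ I ^ r) :=
    ⟨fun a b c => by
      rw [Algebra.smul_def, Algebra.smul_def, Algebra.smul_def, Algebra.smul_def, mul_left_comm]⟩
  letI : IsScalarTower R (R ⧸ I ^ (2 * r)) (R ⧸ I ^ r) :=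
    IsScalarTower.of_algebraMap_eq fun a => rfl
  set τ : (Ω[R⁄k] ⊗[R] (R ⧸ I ^ (2 * r))) →ₗ[R] (Ω[R⁄k] ⊗[R] (R ⧸ I ^ r)) :=
    LinearMap.lTensor (Ω[R⁄k])
      (Submodule.mapQ (I ^ (2 * r)) (I ^ r) LinearMap.id
        (by simpa using Ideal.pow_le_pow_right (by omega : r ≤ 2 * r))) with hτ
  set π2 := kaehlerQuotPi k R I (2 * r) with hπ2
  have halg : Function.Surjective (algebraMap R (R ⧸ I ^ (2 * r))) := by
    rw [Ideal.Quotient.algebraMap_eq]; exact Ideal.Quotient.mk_surjective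
  have hsurj : Function.Surjective π2 := by
    intro w
    obtain ⟨u, hu⟩ := KaehlerDifferential.mapBaseChange_surjective k R (R ⧸ I ^ (2 * r)) halg w
    exact ⟨(TensorProduct.comm R _ _).symm u, by
      simpa [hπ2, kaehlerQuotPi] using hu⟩
  have hker : LinearMap.ker π2 ≤ LinearMap.ker τ := by
    intro w hw
    have hw' : KaehlerDifferential.mapBaseChange k R (R ⧸ I ^ (2 * r))
        (TensorProduct.comm R _ _ w) = 0 := hw
    obtain ⟨x, hx⟩ :=
      (KaehlerDifferential.exact_kerCotangentToTensor_mapBaseChange k R _ halg _).mp hw'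
    obtain ⟨y, rfl⟩ := Ideal.toCotangent_surjective _ x
    have hmem : y.1 ∈ I ^ (2 * r) := by
      have h := y.2
      rw [RingHom.mem_ker] at h
      exact Ideal.Quotient.eq_zero_iff_mem.mp h
    have hw2 : w = (KaehlerDifferential.D k R y.1) ⊗ₜ[R] (1 : R ⧸ I ^ (2 * r)) := by
      apply (TensorProduct.comm R (Ω[R⁄k]) (R ⧸ I ^ (2 * r))).injective
      rw [TensorProduct.comm_tmul, ← hx]
      exact (KaehlerDifferential.kerCotangentToTensor_toCotangent k R (R ⧸ I ^ (2 * r)) y).symm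
    rw [LinearMap.mem_ker, hw2, hτ, LinearMap.lTensor_tmul]
    have h1 : (Submodule.mapQ (I ^ (2 * r)) (I ^ r) LinearMap.id
        (by simpa using Ideal.pow_le_pow_right (by omega : r ≤ 2 * r)))
        (1 : R ⧸ I ^ (2 * r)) = (1 : R ⧸ I ^ r) := rfl
    rw [h1]
    exact aux_D_tmul_one_eq_zero k R I r hmem
  let e := LinearMap.quotKerEquivOfSurjective π2 hsurj
  refine ⟨((LinearMap.ker π2).liftQ τ hker) ∘ₗ (e.symm : _ →ₗ[R] _), ?_, ?_⟩
  · intro w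
    have he : e.symm (π2 w) = Submodule.Quotient.mk w := by
      apply e.injective
      rw [LinearEquiv.apply_symm_apply]
      rfl
    simp only [LinearMap.comp_apply, LinearEquiv.coe_coe, he, Submodule.liftQ_apply]
  · -- key computation
    have key : ∀ u, kaehlerQuotPi k R I r (τ u) =
        KaehlerDifferential.map k k (R ⧸ I ^ (2 * r)) (R ⧸ I ^ r) (π2 u) := by
      intro u
      induction u using TensorProduct.induction_on with
      | zero => simp
      | add x y hx hy => simp only [map_add, hx, hy]
      | tmul ω x =>
        have hω : ω ∈ Submodule.span R (Set.range (KaehlerDifferential.D k R)) := by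
          rw [KaehlerDifferential.span_range_derivation]; trivial
        induction hω using Submodule.span_induction with
        | mem ω hω =>
          obtain ⟨a, rfl⟩ := hω
          obtain ⟨b, rfl⟩ := Ideal.Quotient.mk_surjective x
          rw [hτ, LinearMap.lTensor_tmul]
          have h1 : (Submodule.mapQ (I ^ (2 * r)) (I ^ r) LinearMap.id
              (by simpa using Ideal.pow_le_pow_right (by omega : r ≤ 2 * r)))
              (Ideal.Quotient.mk (I ^ (2 * r)) b) = Ideal.Quotient.mk (I ^ r) b := rfl
          rw [h1]
          show (KaehlerDifferential.mapBaseChange k R (R ⧸ I ^ r))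
              ((TensorProduct.comm R _ _) (_ ⊗ₜ _)) = _
          rw [TensorProduct.comm_tmul, KaehlerDifferential.mapBaseChange_tmul]
          have h2 : π2 ((KaehlerDifferential.D k R a) ⊗ₜ (Ideal.Quotient.mk (I ^ (2 * r)) b)) =
              (Ideal.Quotient.mk (I ^ (2 * r)) b) •
                KaehlerDifferential.map k k R (R ⧸ I ^ (2 * r)) (KaehlerDifferential.D k R a) := by
            show (KaehlerDifferential.mapBaseChange k R (R ⧸ I ^ (2 * r)))
                ((TensorProduct.comm R _ _) (_ ⊗ₜ _)) = _
            rw [TensorProduct.comm_tmul, KaehlerDifferential.mapBaseChange_tmul]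
          rw [h2, map_smul, KaehlerDifferential.map_D, KaehlerDifferential.map_D,
            KaehlerDifferential.map_D]
          have h3 : algebraMap (R ⧸ I ^ (2 * r)) (R ⧸ I ^ r)
              (algebraMap R (R ⧸ I ^ (2 * r)) a) = algebraMap R (R ⧸ I ^ r) a := rfl
          rw [h3]
          have h4 : (Ideal.Quotient.mk (I ^ (2 * r)) b) •
              (KaehlerDifferential.D k (R ⧸ I ^ r)) (algebraMap R (R ⧸ I ^ r) a) =
              (Ideal.Quotient.mk (I ^ r) b) •
              (KaehlerDifferential.D k (R ⧸ I ^ r)) (algebraMap R (R ⧸ I ^ r) a) := by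
            rw [show (Ideal.Quotient.mk (I ^ r) b) = algebraMap (R ⧸ I ^ (2 * r)) (R ⧸ I ^ r)
              (Ideal.Quotient.mk (I ^ (2 * r)) b) from rfl, algebraMap_smul]
          rw [h4]
        | zero => simp
        | add ω₁ ω₂ _ _ h₁ h₂ =>
          rw [TensorProduct.add_tmul, LinearMap.map_add τ, LinearMap.map_add π2,
            LinearMap.map_add (kaehlerQuotPi k R I r), h₁, h₂]
          exact (LinearMap.map_add
            (KaehlerDifferential.map k k (R ⧸ I ^ (2 * r)) (R ⧸ I ^ r)) _ _).symm
        | smul c ω _ h =>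
          have e1 : τ ((c • ω) ⊗ₜ[R] x) = c • τ (ω ⊗ₜ[R] x) := by
            rw [← TensorProduct.smul_tmul', LinearMap.map_smul]
          have e2 : π2 ((c • ω) ⊗ₜ[R] x) = c • π2 (ω ⊗ₜ[R] x) := by
            rw [← TensorProduct.smul_tmul', LinearMap.map_smul]
          rw [e1, e2, LinearMap.map_smul, h,
            ← algebraMap_smul (R ⧸ I ^ (2 * r)) c (π2 (ω ⊗ₜ[R] x)),
            LinearMap.map_smul, algebraMap_smul]
    intro w
    obtain ⟨u, rfl⟩ := hsurj w
    have he : e.symm (π2 u) = Submodule.Quotient.mk u := by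
      apply e.injective; rw [LinearEquiv.apply_symm_apply]; rfl
    simp only [LinearMap.comp_apply, LinearEquiv.coe_coe, he, Submodule.liftQ_apply]
    exact key u
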